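/- Let f : ℝ^d → ℝ be twice continuously differentiable and i ≠ j coordinate indices. The following are equivalent: (1) f(x) = f₁(x_{-i}) + f₂(x_{-j}) for some functions f₁, f₂; (2) ∂f/∂xᵢ(x) does not depend on xⱼ, i.e., ∂f/∂xᵢ(x) = F(x_{-j}) for some function F; (3) ∂²f/∂xᵢ∂xⱼ(x) = 0 for all x. -/

import Mathlib

private lemma line_hasDerivAt {d : ℕ} {g : (Fin d → ℝ) → ℝ} (hg : Differentiable ℝ g)
    (x v : Fin d → ℝ) (t : ℝ) :
    HasDerivAt (fun s : ℝ => g (x + s • v)) (fderiv ℝ g (x + t • v) v) t := by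
  have h1 : HasDerivAt (fun s : ℝ => x + s • v) v t := by
    simpa using ((hasDerivAt_id t).smul_const v).const_add x
  exact (hg (x + t • v)).hasFDerivAt.comp_hasDerivAt t h1

private lemma indep_iff {d : ℕ} {g : (Fin d → ℝ) → ℝ} (hg : Differentiable ℝ g) (j : Fin d) :
    (∀ x y : Fin d → ℝ, (∀ k, k ≠ j → x k = y k) → g x = g y) ↔
      ∀ x, fderiv ℝ g x (Pi.single j 1) = 0 := by
  constructor
  · intro h x
    have hc : ∀ t : ℝ, g (x + t • (Pi.single j 1 : Fin d → ℝ)) = g x := by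
      intro t
      apply h
      intro k hk
      simp [Pi.single_eq_of_ne hk]
    have h1 := line_hasDerivAt hg x (Pi.single j 1) 0
    have h2 : HasDerivAt (fun s : ℝ => g (x + s • (Pi.single j 1 : Fin d → ℝ))) 0 0 := by
      simp only [hc]; exact hasDerivAt_const 0 (g x)
    have h3 := h1.unique h2
    simpa using h3
  · intro h x y hxy
    have hy : y = x + (y j - x j) • (Pi.single j 1 : Fin d → ℝ) := by
      funext k
      by_cases hk : k = j
      · subst hk; simp
      · simp [Pi.single_eq_of_ne hk, hxy k hk]
    have hd : ∀ t : ℝ, HasDerivAt (fun s : ℝ => g (x + s • (Pi.single j 1 : Fin d → ℝ))) 0 t := by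
      intro t
      have h1 := line_hasDerivAt hg x (Pi.single j 1) t
      rwa [h] at h1
    have hc := is_const_of_deriv_eq_zero (fun t => (hd t).differentiableAt)
      (fun t => (hd t).deriv) (y j - x j) 0
    rw [hy]
    simpa using hc.symm

/-- Equivalent criteria for pairwise functional independence of coordinates `i` and `j`
of a twice continuously differentiable function `f : ℝ^d → ℝ`:
(1) additive decomposition avoiding `xᵢ` resp. `xⱼ`;
(2) `∂f/∂xᵢ` does not depend on `xⱼ`;
(3) the mixed second partial `∂²f/∂xᵢ∂xⱼ` vanishes identically. -/
theorem functional_independence_criteria {d : ℕ} (f : (Fin d → ℝ) → ℝ)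
    (hf : ContDiff ℝ 2 f) (i j : Fin d) (hij : i ≠ j) :
    ((∃ f₁ f₂ : (Fin d → ℝ) → ℝ,
        (∀ x y : Fin d → ℝ, (∀ k, k ≠ i → x k = y k) → f₁ x = f₁ y) ∧
        (∀ x y : Fin d → ℝ, (∀ k, k ≠ j → x k = y k) → f₂ x = f₂ y) ∧
        (∀ x, f x = f₁ x + f₂ x)) ↔
      (∃ F : (Fin d → ℝ) → ℝ,
        (∀ x y : Fin d → ℝ, (∀ k, k ≠ j → x k = y k) → F x = F y) ∧
        (∀ x, fderiv ℝ f x (Pi.single i 1) = F x))) ∧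
    ((∃ F : (Fin d → ℝ) → ℝ,
        (∀ x y : Fin d → ℝ, (∀ k, k ≠ j → x k = y k) → F x = F y) ∧
        (∀ x, fderiv ℝ f x (Pi.single i 1) = F x)) ↔
      (∀ x : Fin d → ℝ,
        fderiv ℝ (fun y => fderiv ℝ f y (Pi.single i 1)) x (Pi.single j 1) = 0)) := by
  have hdf : Differentiable ℝ f := hf.differentiable (by norm_num)
  have hg : Differentiable ℝ (fun y => fderiv ℝ f y (Pi.single i 1)) :=
    ((hf.fderiv_right (m := 1) (by norm_num)).differentiable (by norm_num)).clm_apply (differentiable_const _)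
  constructor
  · constructor
    · rintro ⟨f₁, f₂, h₁, h₂, hsum⟩
      refine ⟨fun x => fderiv ℝ f x (Pi.single i 1), ?_, fun x => rfl⟩
      intro x y hxy
      have hagree : ∀ t : ℝ,
          f (x + t • (Pi.single i 1 : Fin d → ℝ)) - f (y + t • (Pi.single i 1 : Fin d → ℝ)) = f₁ x - f₁ y := by
        intro t
        have e1 : f₁ (x + t • (Pi.single i 1 : Fin d → ℝ)) = f₁ x :=
          h₁ _ _ (fun k hk => by simp [Pi.single_eq_of_ne hk])
        have e2 : f₁ (y + t • (Pi.single i 1 : Fin d → ℝ)) = f₁ y :=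
          h₁ _ _ (fun k hk => by simp [Pi.single_eq_of_ne hk])
        have e3 : f₂ (x + t • (Pi.single i 1 : Fin d → ℝ)) = f₂ (y + t • (Pi.single i 1 : Fin d → ℝ)) :=
          h₂ _ _ (fun k hk => by simp [hxy k hk])
        rw [hsum, hsum, e1, e2, e3]; ring
      have hψ := (line_hasDerivAt hdf x (Pi.single i 1) 0).sub
        (line_hasDerivAt hdf y (Pi.single i 1) 0)
      have hconst : HasDerivAt
          (fun t : ℝ => f (x + t • (Pi.single i 1 : Fin d → ℝ)) - f (y + t • (Pi.single i 1 : Fin d → ℝ))) 0 0 := by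
        simp only [hagree]; exact hasDerivAt_const _ _
      have h0 := hψ.unique hconst
      simp only [zero_smul, add_zero] at h0
      exact sub_eq_zero.mp h0
    · rintro ⟨F, hF1, hF2⟩
      refine ⟨fun x => f (Function.update x i 0), fun x => f x - f (Function.update x i 0),
        ?_, ?_, fun x => by ring⟩
      · intro x y hxy
        have huv : Function.update x i 0 = Function.update y i 0 := by
          funext k
          by_cases hk : k = i
          · subst hk; simp
          · simp [Function.update_of_ne hk, hxy k hk]
        show f (Function.update x i 0) = f (Function.update y i 0)
        rw [huv]
      · intro x y hxy
        have hxyi : x i = y i := hxy i hij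
        have hupd : ∀ z : Fin d → ℝ,
            Function.update z i 0 = z + (-(z i)) • (Pi.single i 1 : Fin d → ℝ) := by
          intro z; funext k
          by_cases hk : k = i
          · subst hk; simp
          · simp [Function.update_of_ne hk, Pi.single_eq_of_ne hk]
        have hψ : ∀ t : ℝ, HasDerivAt
            (fun s : ℝ => f (x + s • (Pi.single i 1 : Fin d → ℝ)) - f (y + s • (Pi.single i 1 : Fin d → ℝ))) 0 t := by
          intro t
          have h1 := (line_hasDerivAt hdf x (Pi.single i 1) t).sub
            (line_hasDerivAt hdf y (Pi.single i 1) t)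
          have e : fderiv ℝ f (x + t • (Pi.single i 1 : Fin d → ℝ)) (Pi.single i 1)
              - fderiv ℝ f (y + t • (Pi.single i 1 : Fin d → ℝ)) (Pi.single i 1) = 0 := by
            have e4 : F (x + t • (Pi.single i 1 : Fin d → ℝ))
                = F (y + t • (Pi.single i 1 : Fin d → ℝ)) :=
              hF1 _ _ (fun k hk => by simp [hxy k hk])
            rw [hF2, hF2, e4, sub_self]
          rwa [e] at h1
        have hc := is_const_of_deriv_eq_zero (fun t => (hψ t).differentiableAt)
          (fun t => (hψ t).deriv) 0 (-(x i))
        simp only [zero_smul, add_zero] at hc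
        show f x - f (Function.update x i 0) = f y - f (Function.update y i 0)
        rw [hupd x, hupd y, ← hxyi]
        linarith [hc]
  · constructor
    · rintro ⟨F, hF1, hF2⟩
      intro x
      refine (indep_iff hg j).mp ?_ x
      intro a b hab
      simp only [hF2]
      exact hF1 a b hab
    · intro h
      exact ⟨fun y => fderiv ℝ f y (Pi.single i 1), (indep_iff hg j).mpr h, fun x => rfl⟩
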